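/- arXiv:2206.03475 — 2 statements merged into one kernel-verified Lean document; each statement's English description precedes it below -/
import Mathlib

section
/- Let M be a compact metric space with base point 0 and let f ∈ S_{Lip_0(M)} be a w*-Δ-point. Then f is local. -/
open Metric Set Filter NNReal

noncomputable section

/-- The old Mathlib `NormedSpace.Dual` (topology on `E` from its norm). -/
abbrev NormedSpace.Dual (𝕜 : Type*) (E : Type*) [NontriviallyNormedField 𝕜]
    [SeminormedAddCommGroup E] [NormedSpace 𝕜 E] : Type _ := E →L[𝕜] 𝕜

namespace DeltaPaper

/-! ### Generic Banach space notions -/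

variable {X : Type*} [NormedAddCommGroup X] [NormedSpace ℝ X]

/-- `x` is a Daugavet-point: every slice of the unit ball contains, for every `ε > 0`,
an element at distance at least `2 - ε` from `x`. -/
def IsDaugavetPoint (x : X) : Prop :=
  ∀ (φ : NormedSpace.Dual ℝ X) (α : ℝ), ‖φ‖ = 1 → 0 < α → ∀ ε > 0,
    ∃ y : X, ‖y‖ ≤ 1 ∧ 1 - α < φ y ∧ 2 - ε ≤ ‖x - y‖

/-- `x` is a Δ-point: every slice of the unit ball containing `x` contains, for every
`ε > 0`, an element at distance at least `2 - ε` from `x`. -/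
def IsDeltaPoint (x : X) : Prop :=
  ∀ (φ : NormedSpace.Dual ℝ X) (α : ℝ), ‖φ‖ = 1 → 0 < α → 1 - α < φ x → ∀ ε > 0,
    ∃ y : X, ‖y‖ ≤ 1 ∧ 1 - α < φ y ∧ 2 - ε ≤ ‖x - y‖

/-- `x*` is a w*-Daugavet-point of the dual of `X`. -/
def IsWeakStarDaugavetPoint (f : NormedSpace.Dual ℝ X) : Prop :=
  ∀ (x : X) (α : ℝ), ‖x‖ = 1 → 0 < α → ∀ ε > 0,
    ∃ g : NormedSpace.Dual ℝ X, ‖g‖ ≤ 1 ∧ 1 - α < g x ∧ 2 - ε ≤ ‖f - g‖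

/-- `x*` is a w*-Δ-point of the dual of `X`. -/
def IsWeakStarDeltaPoint (f : NormedSpace.Dual ℝ X) : Prop :=
  ∀ (x : X) (α : ℝ), ‖x‖ = 1 → 0 < α → 1 - α < f x → ∀ ε > 0,
    ∃ g : NormedSpace.Dual ℝ X, ‖g‖ ≤ 1 ∧ 1 - α < g x ∧ 2 - ε ≤ ‖f - g‖

/-- `x` is a denting point of the unit ball: it lies in slices of the unit ball of
arbitrarily small diameter. -/
def IsDentingPoint (x : X) : Prop :=
  ‖x‖ ≤ 1 ∧ ∀ ε > 0, ∃ (φ : NormedSpace.Dual ℝ X) (α : ℝ), ‖φ‖ = 1 ∧ 0 < α ∧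
    1 - α < φ x ∧ Metric.diam {y : X | ‖y‖ ≤ 1 ∧ 1 - α < φ y} < ε

/-- The Kuratowski measure of non-compactness of a set: the infimum of all `ε > 0`
such that the set can be covered by finitely many sets of diameter less than `ε`. -/
def kuratowski {Y : Type*} [PseudoMetricSpace Y] (A : Set Y) : ℝ :=
  sInf {ε : ℝ | 0 < ε ∧ ∃ 𝒞 : Finset (Set Y), (A ⊆ ⋃ B ∈ 𝒞, B) ∧ ∀ B ∈ 𝒞, Metric.diam B < ε}

/-! ### The space of Lipschitz functions vanishing at a base point -/

variable {M : Type*} [PseudoMetricSpace M]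

/-- The least Lipschitz constant of a function. -/
def lipConst (f : M → ℝ) : ℝ≥0 := sInf {K | LipschitzWith K f}

theorem lipschitzWith_lipConst {f : M → ℝ} (hf : ∃ K, LipschitzWith K f) :
    LipschitzWith (lipConst f) f := by
  obtain ⟨K₀, hK₀⟩ := hf
  rw [lipschitzWith_iff_dist_le_mul]
  intro x y
  rcases le_or_gt (dist x y) 0 with h | h
  · have h0 : dist x y = 0 := le_antisymm h dist_nonneg
    have := hK₀.dist_le_mul x y
    rw [h0, mul_zero] at this ⊢
    exact this
  · rw [← div_le_iff₀ h]
    have hnn : 0 ≤ dist (f x) (f y) / dist x y := by positivity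
    rw [← Real.coe_toNNReal _ hnn, NNReal.coe_le_coe]
    refine le_csInf ⟨K₀, hK₀⟩ ?_
    intro K hK
    rw [← NNReal.coe_le_coe, Real.coe_toNNReal _ hnn, div_le_iff₀ h]
    exact hK.dist_le_mul x y

theorem lipConst_le {f : M → ℝ} {K : ℝ≥0} (hK : LipschitzWith K f) : lipConst f ≤ K :=
  csInf_le (OrderBot.bddBelow _) hK

theorem lipschitzWith_smul {f : M → ℝ} {K : ℝ≥0} (hK : LipschitzWith K f) (c : ℝ) :
    LipschitzWith (‖c‖₊ * K) (c • f) := by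
  rw [lipschitzWith_iff_dist_le_mul] at *
  intro x y
  have : dist ((c • f) x) ((c • f) y) = ‖c‖ * dist (f x) (f y) := by
    simp only [Pi.smul_apply, smul_eq_mul, Real.dist_eq, ← mul_sub, abs_mul, Real.norm_eq_abs]
  rw [this, NNReal.coe_mul, coe_nnnorm, mul_assoc]
  exact mul_le_mul_of_nonneg_left (hK x y) (norm_nonneg c)

variable (M) in
/-- The submodule of `M → ℝ` consisting of Lipschitz functions vanishing at the
base point `z`. -/
def Lip0 (z : M) : Submodule ℝ (M → ℝ) where
  carrier := {f | (∃ K, LipschitzWith K f) ∧ f z = 0}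
  add_mem' := by
    rintro f g ⟨⟨K, hK⟩, hf0⟩ ⟨⟨L, hL⟩, hg0⟩
    exact ⟨⟨K + L, hK.add hL⟩, by simp [hf0, hg0]⟩
  zero_mem' := ⟨⟨0, LipschitzWith.const' 0⟩, rfl⟩
  smul_mem' := by
    rintro c f ⟨⟨K, hK⟩, hf0⟩
    exact ⟨⟨‖c‖₊ * K, lipschitzWith_smul hK c⟩, by simp [hf0]⟩

variable {z : M}

instance : NormedAddCommGroup ↥(Lip0 M z) :=
  AddGroupNorm.toNormedAddCommGroup
    { toFun := fun f => ((lipConst (f : M → ℝ) : ℝ≥0) : ℝ)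
      map_zero' := by
        have h0 : lipConst (0 : M → ℝ) = 0 :=
          le_antisymm (lipConst_le (by simpa using LipschitzWith.const' (0 : ℝ))) bot_le
        show ((lipConst ((0 : ↥(Lip0 M z)) : M → ℝ) : ℝ≥0) : ℝ) = 0
        rw [show ((0 : ↥(Lip0 M z)) : M → ℝ) = 0 from rfl, h0, NNReal.coe_zero]
      add_le' := by
        intro f g
        have hf := lipschitzWith_lipConst f.2.1
        have hg := lipschitzWith_lipConst g.2.1
        have : lipConst ((f + g : ↥(Lip0 M z)) : M → ℝ) ≤
            lipConst (f : M → ℝ) + lipConst (g : M → ℝ) := by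
          refine lipConst_le ?_
          have := hf.add hg
          exact this
        exact_mod_cast this
      neg' := by
        intro f
        show ((lipConst ((-f : ↥(Lip0 M z)) : M → ℝ) : ℝ≥0) : ℝ) = _
        rw [show ((-f : ↥(Lip0 M z)) : M → ℝ) = -(f : M → ℝ) from rfl]
        unfold lipConst
        congr 2
        ext K
        exact ⟨fun hK => by simpa using hK.neg, fun hK => hK.neg⟩
      eq_zero_of_map_eq_zero' := by
        intro f hf
        replace hf : ((lipConst (f : M → ℝ) : ℝ≥0) : ℝ) = 0 := hf
        have h0 : lipConst (f : M → ℝ) = 0 := by exact_mod_cast hf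
        have hl : LipschitzWith 0 (f : M → ℝ) := h0 ▸ lipschitzWith_lipConst f.2.1
        ext x
        have := hl.dist_le_mul x z
        simp only [NNReal.coe_zero, zero_mul] at this
        have hxz : (f : M → ℝ) x = (f : M → ℝ) z :=
          dist_le_zero.mp this
        simpa [f.2.2] using hxz }

theorem Lip0.norm_def (f : ↥(Lip0 M z)) : ‖f‖ = ((lipConst (f : M → ℝ) : ℝ≥0) : ℝ) := rfl

theorem Lip0.lipschitzWith (f : ↥(Lip0 M z)) : LipschitzWith (lipConst (f : M → ℝ)) (f : M → ℝ) :=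
  lipschitzWith_lipConst f.2.1

instance : NormedSpace ℝ ↥(Lip0 M z) where
  norm_smul_le c f := by
    have : lipConst ((c • f : ↥(Lip0 M z)) : M → ℝ) ≤ ‖c‖₊ * lipConst (f : M → ℝ) :=
      lipConst_le (lipschitzWith_smul (Lip0.lipschitzWith f) c)
    calc ‖c • f‖ = ((lipConst ((c • f : ↥(Lip0 M z)) : M → ℝ) : ℝ≥0) : ℝ) := rfl
      _ ≤ ((‖c‖₊ * lipConst (f : M → ℝ) : ℝ≥0) : ℝ) := by exact_mod_cast this
      _ = ‖c‖ * ‖f‖ := by push_cast [Lip0.norm_def]; rfl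

variable (M z) in
/-- The evaluation functional `δ_x ∈ Lip₀(M)*`. -/
def evalδ (x : M) : NormedSpace.Dual ℝ ↥(Lip0 M z) :=
  LinearMap.mkContinuous
    { toFun := fun f => (f : M → ℝ) x
      map_add' := fun f g => rfl
      map_smul' := fun c f => rfl }
    (dist x z)
    (by
      intro f
      have := (Lip0.lipschitzWith f).dist_le_mul x z
      simp only [f.2.2, Real.dist_eq, sub_zero] at this
      calc ‖(f : M → ℝ) x‖ = |(f : M → ℝ) x - 0| := by simp
        _ ≤ (lipConst (f : M → ℝ) : ℝ) * dist x z := by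
            simpa [f.2.2, Real.dist_eq] using (Lip0.lipschitzWith f).dist_le_mul x z
        _ = dist x z * ‖f‖ := by rw [Lip0.norm_def, mul_comm])

variable (M z) in
/-- The Lipschitz-free space over `M`: the closed linear span of the evaluation
functionals inside `Lip₀(M)*`. -/
def FreeSpace : Submodule ℝ (NormedSpace.Dual ℝ ↥(Lip0 M z)) :=
  (Submodule.span ℝ (Set.range (evalδ M z))).topologicalClosure

variable (M z) in
/-- The molecule `m_{x y} = (δ_x - δ_y)/d(x,y)` as an element of `Lip₀(M)*`. -/
def molecule (x y : M) : NormedSpace.Dual ℝ ↥(Lip0 M z) :=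
  (dist x y)⁻¹ • (evalδ M z x - evalδ M z y)

theorem molecule_mem_freeSpace (x y : M) : molecule M z x y ∈ FreeSpace M z :=
  Submodule.le_topologicalClosure _
    (Submodule.smul_mem _ _ (Submodule.sub_mem _
      (Submodule.subset_span ⟨x, rfl⟩) (Submodule.subset_span ⟨y, rfl⟩)))

variable (M z) in
/-- The molecule `m_{x y}` as an element of the free space `F(M)`. -/
def mol (x y : M) : ↥(FreeSpace M z) := ⟨molecule M z x y, molecule_mem_freeSpace x y⟩

variable (M) in
/-- A metric space is uniformly discrete if distances between distinct points are
bounded below by a positive constant. -/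
def UniformlyDiscrete : Prop := ∃ θ > (0:ℝ), ∀ x y : M, x ≠ y → θ ≤ dist x y

/-- A norm-one Lipschitz function is local if its Lipschitz constant is approximated
on pairs of arbitrarily close points. -/
def IsLocal (f : ↥(Lip0 M z)) : Prop :=
  ∀ ε > 0, ∃ u v : M, u ≠ v ∧
    ‖f‖ - ε < ((f : M → ℝ) u - (f : M → ℝ) v) / dist u v ∧ dist u v < ε

/-- `f ∈ S_{Lip₀(M)}` is a w*-Daugavet-point: for every w*-slice `S(μ, α)` of
`B_{Lip₀(M)}` (`μ` a norm-one element of `F(M)`) and every `ε > 0` there is `g` in the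
slice with `‖f - g‖ ≥ 2 - ε`. -/
def IsLipWeakStarDaugavetPoint (f : ↥(Lip0 M z)) : Prop :=
  ∀ μ : NormedSpace.Dual ℝ ↥(Lip0 M z), μ ∈ FreeSpace M z → ‖μ‖ = 1 → ∀ α > (0:ℝ), ∀ ε > (0:ℝ),
    ∃ g : ↥(Lip0 M z), ‖g‖ ≤ 1 ∧ 1 - α < μ g ∧ 2 - ε ≤ ‖f - g‖

/-- `f ∈ S_{Lip₀(M)}` is a w*-Δ-point: the same as above, but only for w*-slices
containing `f`. -/
def IsLipWeakStarDeltaPoint (f : ↥(Lip0 M z)) : Prop :=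
  ∀ μ : NormedSpace.Dual ℝ ↥(Lip0 M z), μ ∈ FreeSpace M z → ‖μ‖ = 1 → ∀ α > (0:ℝ),
    1 - α < μ f → ∀ ε > (0:ℝ),
    ∃ g : ↥(Lip0 M z), ‖g‖ ≤ 1 ∧ 1 - α < μ g ∧ 2 - ε ≤ ‖f - g‖

end DeltaPaper

open DeltaPaper NormedSpace


section Helpers

variable {M : Type*} [PseudoMetricSpace M] {z : M}

lemma lip0_abs_sub_le (f : ↥(Lip0 M z)) (x y : M) :
    |(f : M → ℝ) x - (f : M → ℝ) y| ≤ ‖f‖ * dist x y := by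
  have h := (Lip0.lipschitzWith f).dist_le_mul x y
  rw [Real.dist_eq] at h
  rw [Lip0.norm_def]
  exact h

lemma exists_slope_gt (f : ↥(Lip0 M z)) {c : ℝ} (hc0 : 0 ≤ c) (hc : c < ‖f‖) :
    ∃ p q : M, c * dist p q < (f : M → ℝ) p - (f : M → ℝ) q ∧ 0 < dist p q := by
  by_contra h
  push_neg at h
  have hle : ∀ p q : M, (f : M → ℝ) p - (f : M → ℝ) q ≤ c * dist p q := by
    intro p q
    by_contra hlt
    push_neg at hlt
    have hd := h p q hlt
    have hd0 : dist p q = 0 := le_antisymm hd dist_nonneg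
    have hb := lip0_abs_sub_le f p q
    rw [hd0, mul_zero] at hb hlt
    have := le_abs_self ((f : M → ℝ) p - (f : M → ℝ) q)
    linarith
  have hlip : LipschitzWith c.toNNReal (f : M → ℝ) := by
    rw [lipschitzWith_iff_dist_le_mul]
    intro x y
    rw [Real.dist_eq, Real.coe_toNNReal _ hc0]
    rw [abs_sub_le_iff]
    exact ⟨hle x y, by rw [dist_comm]; exact hle y x⟩
  have hnorm : ‖f‖ ≤ c := by
    rw [Lip0.norm_def]
    have h1 := lipConst_le hlip
    calc ((lipConst (f : M → ℝ) : ℝ≥0) : ℝ) ≤ ((c.toNNReal : ℝ≥0) : ℝ) := by exact_mod_cast h1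
      _ = c := Real.coe_toNNReal _ hc0
  linarith

lemma molecule_apply (x y : M) (g : ↥(Lip0 M z)) :
    molecule M z x y g = (dist x y)⁻¹ * ((g : M → ℝ) x - (g : M → ℝ) y) := rfl

lemma norm_molecule_le (x y : M) : ‖molecule M z x y‖ ≤ 1 := by
  refine ContinuousLinearMap.opNorm_le_bound _ zero_le_one fun g => ?_
  rw [molecule_apply, Real.norm_eq_abs, one_mul, abs_mul, abs_inv, abs_dist]
  rcases eq_or_lt_of_le (dist_nonneg : (0:ℝ) ≤ dist x y) with h | h
  · have hb := lip0_abs_sub_le g x y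
    rw [← h, mul_zero] at hb
    have h0 : |(g : M → ℝ) x - (g : M → ℝ) y| = 0 := le_antisymm hb (abs_nonneg _)
    rw [← h, h0, mul_zero]
    exact norm_nonneg g
  · have hb := lip0_abs_sub_le g x y
    calc (dist x y)⁻¹ * |(g : M → ℝ) x - (g : M → ℝ) y|
        ≤ (dist x y)⁻¹ * (‖g‖ * dist x y) :=
          mul_le_mul_of_nonneg_left hb (by positivity)
      _ = ‖g‖ := by field_simp

lemma aux_arith {t : ℝ} (ht : 0 < t) : 1 - 5*t ≤ (1 - 2*t) * (1 - 3*t) := by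
  nlinarith [mul_pos ht ht]

end Helpers

set_option maxHeartbeats 1000000

/-- Proposition 4.2. If `M` is compact and `f ∈ S_{Lip₀(M)}` is a
w*-Δ-point, then `f` is local. -/
theorem statement10 {M : Type*} [MetricSpace M] [CompactSpace M] (z : M)
    (f : ↥(Lip0 M z)) (hf : ‖f‖ = 1) (hΔ : IsLipWeakStarDeltaPoint f) :
    IsLocal f := by
  classical
  by_contra hloc
  rw [IsLocal] at hloc
  push_neg at hloc
  obtain ⟨δ, hδ0, hδ⟩ := hloc
  -- convenient form of non-locality
  have hNL : ∀ p q : M, 0 < dist p q →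
      (1 - δ) * dist p q < (f : M → ℝ) p - (f : M → ℝ) q → δ ≤ dist p q := by
    intro p q hd hs
    refine hδ p q (fun hpq => by rw [hpq] at hd; simp at hd) ?_
    rw [hf, lt_div_iff₀ hd]
    linarith
  -- a finite δ/8-net of M × M
  have hTB : TotallyBounded (Set.univ : Set (M × M)) := isCompact_univ.totallyBounded
  obtain ⟨T0, hT0fin, hT0cov⟩ := Metric.totallyBounded_iff.mp hTB (δ/8) (by linarith)
  set T : Finset (M × M) := hT0fin.toFinset with hTdef
  set K : ℕ := T.card with hKdef
  set τ : ℝ := min (δ/8) (1/(8*((K:ℝ)+1))) with hτdef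
  have hK0 : (0:ℝ) ≤ (K:ℝ) := Nat.cast_nonneg K
  have hτ0 : 0 < τ := lt_min (by linarith) (by positivity)
  have hτδ : τ ≤ δ/8 := min_le_left _ _
  have hτK : τ ≤ 1/(8*((K:ℝ)+1)) := min_le_right _ _
  have hτ8 : τ ≤ 1/8 := by
    refine le_trans hτK ?_
    rw [div_le_div_iff₀ (by positivity) (by norm_num)]
    linarith
  have hKτ : 5*(K:ℝ)*τ ≤ 5/8 := by
    have h1 : (K:ℝ)*τ ≤ (K:ℝ)*(1/(8*((K:ℝ)+1))) := mul_le_mul_of_nonneg_left hτK hK0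
    have h2 : (K:ℝ)*(1/(8*((K:ℝ)+1))) ≤ 1/8 := by
      rw [mul_one_div, div_le_div_iff₀ (by positivity) (by norm_num)]
      linarith
    linarith
  -- the set of pairs where f almost attains its norm
  set S : Set (M × M) := {s | (1 - 2*τ) * dist s.1 s.2 ≤ (f : M → ℝ) s.1 - (f : M → ℝ) s.2 ∧
      δ ≤ dist s.1 s.2} with hSdef
  obtain ⟨p₀, q₀, hp₀, hd₀⟩ := exists_slope_gt f (c := 1 - 2*τ) (by linarith) (by rw [hf]; linarith)
  have hS₀ : (p₀, q₀) ∈ S := by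
    refine ⟨hp₀.le, hNL p₀ q₀ hd₀ (lt_of_le_of_lt ?_ hp₀)⟩
    exact mul_le_mul_of_nonneg_right (by linarith) dist_nonneg
  -- pick a net of S of size at most K
  set pick : M × M → M × M := fun t =>
    if h : (S ∩ Metric.ball t (δ/8)).Nonempty then h.choose else (p₀, q₀) with hpickdef
  set F : Finset (M × M) :=
    (T.filter (fun t => (S ∩ Metric.ball t (δ/8)).Nonempty)).image pick with hFdef
  have hpickmem : ∀ t : M × M, (S ∩ Metric.ball t (δ/8)).Nonempty →
      pick t ∈ S ∩ Metric.ball t (δ/8) := by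
    intro t h
    rw [hpickdef]
    simp only [dif_pos h]
    exact h.choose_spec
  have hFS : ∀ w ∈ F, w ∈ S := by
    intro w hw
    rw [hFdef, Finset.mem_image] at hw
    obtain ⟨t, ht, rfl⟩ := hw
    rw [Finset.mem_filter] at ht
    exact (hpickmem t ht.2).1
  have hcov : ∀ s ∈ S, ∃ w ∈ F, dist s.1 w.1 < δ/4 ∧ dist s.2 w.2 < δ/4 := by
    intro s hs
    have hmem : s ∈ ⋃ y ∈ T0, Metric.ball y (δ/8) := hT0cov (Set.mem_univ s)
    rw [Set.mem_iUnion₂] at hmem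
    obtain ⟨t, htT, hst⟩ := hmem
    have htT' : t ∈ T := hT0fin.mem_toFinset.mpr htT
    have hne : (S ∩ Metric.ball t (δ/8)).Nonempty := ⟨s, hs, hst⟩
    have hpt := hpickmem t hne
    refine ⟨pick t, ?_, ?_, ?_⟩
    · rw [hFdef, Finset.mem_image]
      exact ⟨t, Finset.mem_filter.mpr ⟨htT', hne⟩, rfl⟩
    · have h1 : dist s t < δ/8 := hst
      have h2 : dist (pick t) t < δ/8 := hpt.2
      have h1' : dist s.1 t.1 < δ/8 := lt_of_le_of_lt (by rw [Prod.dist_eq]; exact le_max_left _ _) h1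
      have h2' : dist (pick t).1 t.1 < δ/8 := lt_of_le_of_lt (by rw [Prod.dist_eq]; exact le_max_left _ _) h2
      calc dist s.1 (pick t).1 ≤ dist s.1 t.1 + dist t.1 (pick t).1 := dist_triangle _ _ _
        _ < δ/8 + δ/8 := by rw [dist_comm t.1]; linarith
        _ = δ/4 := by ring
    · have h1 : dist s t < δ/8 := hst
      have h2 : dist (pick t) t < δ/8 := hpt.2
      have h1' : dist s.2 t.2 < δ/8 := lt_of_le_of_lt (by rw [Prod.dist_eq]; exact le_max_right _ _) h1
      have h2' : dist (pick t).2 t.2 < δ/8 := lt_of_le_of_lt (by rw [Prod.dist_eq]; exact le_max_right _ _) h2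
      calc dist s.2 (pick t).2 ≤ dist s.2 t.2 + dist t.2 (pick t).2 := dist_triangle _ _ _
        _ < δ/8 + δ/8 := by rw [dist_comm t.2]; linarith
        _ = δ/4 := by ring
  set N : ℕ := F.card with hNdef
  have hNK : N ≤ K := le_trans Finset.card_image_le (Finset.card_filter_le _ _)
  have hFne : F.Nonempty := by
    obtain ⟨w, hw, -⟩ := hcov _ hS₀
    exact ⟨w, hw⟩
  have hN1 : 1 ≤ N := Finset.card_pos.mpr hFne
  have hN0 : (0:ℝ) < (N:ℝ) := by exact_mod_cast hN1
  -- the functional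
  set μ : NormedSpace.Dual ℝ ↥(Lip0 M z) :=
    ((N:ℝ))⁻¹ • ∑ w ∈ F, molecule M z w.1 w.2 with hμdef
  have happ : ∀ g : ↥(Lip0 M z), μ g = (N:ℝ)⁻¹ * ∑ w ∈ F, molecule M z w.1 w.2 g := by
    intro g
    rw [hμdef]
    simp [ContinuousLinearMap.sum_apply]
  have hmolf : ∀ w ∈ F, (1:ℝ) - 2*τ ≤ molecule M z w.1 w.2 f := by
    intro w hw
    obtain ⟨hs, hdw⟩ := hFS w hw
    have hdw0 : 0 < dist w.1 w.2 := lt_of_lt_of_le hδ0 hdw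
    rw [molecule_apply, inv_mul_eq_div, le_div_iff₀ hdw0]
    exact hs
  have hμf : 1 - 2*τ ≤ μ f := by
    rw [happ f]
    have hsum : (N:ℝ) * (1 - 2*τ) ≤ ∑ w ∈ F, molecule M z w.1 w.2 f := by
      calc (N:ℝ) * (1 - 2*τ) = ∑ _w ∈ F, (1 - 2*τ) := by
            rw [Finset.sum_const, nsmul_eq_mul]
        _ ≤ _ := Finset.sum_le_sum hmolf
    have h2 : (N:ℝ)⁻¹ * ((N:ℝ) * (1 - 2*τ)) ≤ (N:ℝ)⁻¹ * ∑ w ∈ F, molecule M z w.1 w.2 f :=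
      mul_le_mul_of_nonneg_left hsum (inv_nonneg.mpr hN0.le)
    rwa [← mul_assoc, inv_mul_cancel₀ (ne_of_gt hN0), one_mul] at h2
  have hμle : ‖μ‖ ≤ 1 := by
    rw [hμdef, norm_smul]
    have hsn : ‖∑ w ∈ F, molecule M z w.1 w.2‖ ≤ (N:ℝ) := by
      calc ‖∑ w ∈ F, molecule M z w.1 w.2‖ ≤ ∑ w ∈ F, ‖molecule M z w.1 w.2‖ :=
            norm_sum_le _ _
        _ ≤ ∑ _w ∈ F, (1:ℝ) := Finset.sum_le_sum fun w _ => norm_molecule_le _ _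
        _ = (N:ℝ) := by rw [Finset.sum_const, nsmul_eq_mul, mul_one]
    calc ‖((N:ℝ))⁻¹‖ * ‖∑ w ∈ F, molecule M z w.1 w.2‖
        ≤ (N:ℝ)⁻¹ * (N:ℝ) := by
          rw [Real.norm_eq_abs, abs_of_pos (inv_pos.mpr hN0)]
          exact mul_le_mul_of_nonneg_left hsn (inv_nonneg.mpr hN0.le)
      _ = 1 := inv_mul_cancel₀ (ne_of_gt hN0)
  have hμfle : μ f ≤ ‖μ‖ := by
    calc μ f ≤ |μ f| := le_abs_self _
      _ = ‖μ f‖ := (Real.norm_eq_abs _).symm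
      _ ≤ ‖μ‖ * ‖f‖ := μ.le_opNorm f
      _ = ‖μ‖ := by rw [hf, mul_one]
  have hμpos : 0 < ‖μ‖ := by
    have : (0:ℝ) < 1 - 2*τ := by linarith
    linarith
  set ν : NormedSpace.Dual ℝ ↥(Lip0 M z) := ‖μ‖⁻¹ • μ with hνdef
  have hνmem : ν ∈ FreeSpace M z := by
    rw [hνdef, hμdef]
    exact Submodule.smul_mem _ _ (Submodule.smul_mem _ _
      (Submodule.sum_mem _ fun w _ => molecule_mem_freeSpace w.1 w.2))
  have hνnorm : ‖ν‖ = 1 := by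
    rw [hνdef, norm_smul, Real.norm_eq_abs, abs_of_pos (inv_pos.mpr hμpos),
      inv_mul_cancel₀ (ne_of_gt hμpos)]
  have hνapp : ∀ g : ↥(Lip0 M z), ν g = ‖μ‖⁻¹ * μ g := by
    intro g
    rw [hνdef]
    simp
  have hinv1 : (1:ℝ) ≤ ‖μ‖⁻¹ := by
    have hid : ‖μ‖⁻¹ * ‖μ‖ = 1 := inv_mul_cancel₀ (ne_of_gt hμpos)
    have hm : ‖μ‖⁻¹ * ‖μ‖ ≤ ‖μ‖⁻¹ * 1 :=
      mul_le_mul_of_nonneg_left hμle (inv_pos.mpr hμpos).le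
    linarith
  have hνf : 1 - 3*τ < ν f := by
    have hμf0 : 0 ≤ μ f := by linarith
    calc 1 - 3*τ < 1 - 2*τ := by linarith
      _ ≤ μ f := hμf
      _ = 1 * μ f := (one_mul _).symm
      _ ≤ ‖μ‖⁻¹ * μ f := mul_le_mul_of_nonneg_right hinv1 hμf0
      _ = ν f := (hνapp f).symm
  -- apply the Δ-point property
  obtain ⟨g, hg1, hgν, hgfar⟩ := hΔ ν hνmem hνnorm (3*τ) (by linarith) hνf τ hτ0
  -- per-molecule lower bound for g
  have hgμ : 1 - 5*τ < μ g := by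
    have hμg : μ g = ‖μ‖ * ν g := by
      rw [hνapp, ← mul_assoc, mul_inv_cancel₀ (ne_of_gt hμpos), one_mul]
    rw [hμg]
    calc 1 - 5*τ ≤ (1 - 2*τ) * (1 - 3*τ) := aux_arith hτ0
      _ ≤ ‖μ‖ * (1 - 3*τ) := mul_le_mul_of_nonneg_right (le_trans hμf hμfle) (by linarith)
      _ < ‖μ‖ * ν g := mul_lt_mul_of_pos_left hgν hμpos
  have hmolg1 : ∀ w ∈ F, molecule M z w.1 w.2 g ≤ 1 := by
    intro w _
    calc molecule M z w.1 w.2 g ≤ |molecule M z w.1 w.2 g| := le_abs_self _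
      _ = ‖molecule M z w.1 w.2 g‖ := (Real.norm_eq_abs _).symm
      _ ≤ ‖molecule M z w.1 w.2‖ * ‖g‖ := ContinuousLinearMap.le_opNorm _ _
      _ ≤ 1 * 1 := mul_le_mul (norm_molecule_le _ _) hg1 (norm_nonneg _) zero_le_one
      _ = 1 := one_mul _
  have hmolg : ∀ w ∈ F, (1 - 5*(K:ℝ)*τ) ≤ molecule M z w.1 w.2 g := by
    intro w₀ hw₀
    have hsq : ∑ w ∈ F, molecule M z w.1 w.2 g =
        molecule M z w₀.1 w₀.2 g + ∑ w ∈ F.erase w₀, molecule M z w.1 w.2 g :=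
      (Finset.add_sum_erase F _ hw₀).symm
    have hsum_lb : (N:ℝ) * (1 - 5*τ) < ∑ w ∈ F, molecule M z w.1 w.2 g := by
      have h1 := hgμ
      rw [happ g] at h1
      have h2 : (N:ℝ) * (1 - 5*τ) < (N:ℝ) * ((N:ℝ)⁻¹ * ∑ w ∈ F, molecule M z w.1 w.2 g) :=
        mul_lt_mul_of_pos_left h1 hN0
      rwa [← mul_assoc, mul_inv_cancel₀ (ne_of_gt hN0), one_mul] at h2
    have herase : ∑ w ∈ F.erase w₀, molecule M z w.1 w.2 g ≤ (N:ℝ) - 1 := by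
      calc ∑ w ∈ F.erase w₀, molecule M z w.1 w.2 g ≤ ∑ _w ∈ F.erase w₀, (1:ℝ) :=
            Finset.sum_le_sum fun w hw => hmolg1 w (Finset.mem_of_mem_erase hw)
        _ = ((F.erase w₀).card : ℝ) := by rw [Finset.sum_const, nsmul_eq_mul, mul_one]
        _ = (N:ℝ) - 1 := by
            rw [Finset.card_erase_of_mem hw₀]
            rw [Nat.cast_sub hN1]
            norm_num
    have hW : 1 - 5*(N:ℝ)*τ ≤ molecule M z w₀.1 w₀.2 g := by linarith
    have hNKr : (N:ℝ) ≤ (K:ℝ) := by exact_mod_cast hNK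
    have hNKτ : (N:ℝ)*τ ≤ (K:ℝ)*τ := mul_le_mul_of_nonneg_right hNKr hτ0.le
    linarith
  -- extract a far pair from ‖f - g‖
  have hcoe : ((f - g : ↥(Lip0 M z)) : M → ℝ) = (f : M → ℝ) - (g : M → ℝ) := rfl
  obtain ⟨p, q, hpq, hdpq⟩ := exists_slope_gt (f - g) (c := 2 - 2*τ) (by linarith)
    (by linarith)
  rw [hcoe] at hpq
  simp only [Pi.sub_apply] at hpq
  have hgle : ∀ a b : M, |(g : M → ℝ) a - (g : M → ℝ) b| ≤ dist a b := by
    intro a b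
    calc |(g : M → ℝ) a - (g : M → ℝ) b| ≤ ‖g‖ * dist a b := lip0_abs_sub_le g a b
      _ ≤ dist a b := mul_le_of_le_one_left dist_nonneg hg1
  have hfle : ∀ a b : M, |(f : M → ℝ) a - (f : M → ℝ) b| ≤ dist a b := by
    intro a b
    have := lip0_abs_sub_le f a b
    rwa [hf, one_mul] at this
  have hfpq : (1 - 2*τ) * dist p q < (f : M → ℝ) p - (f : M → ℝ) q := by
    have h1 := abs_le.mp (hgle p q)
    linarith [h1.1, h1.2]
  have hgqp : (1 - 2*τ) * dist p q < (g : M → ℝ) q - (g : M → ℝ) p := by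
    have h1 := abs_le.mp (hfle p q)
    linarith [h1.1, h1.2]
  have hdδ : δ ≤ dist p q := by
    refine hNL p q hdpq (lt_of_le_of_lt ?_ hfpq)
    exact mul_le_mul_of_nonneg_right (by linarith) dist_nonneg
  have hpqS : (p, q) ∈ S := ⟨hfpq.le, hdδ⟩
  obtain ⟨w, hwF, hw1, hw2⟩ := hcov (p, q) hpqS
  obtain ⟨hwslope, hwd⟩ := hFS w hwF
  have hwd0 : 0 < dist w.1 w.2 := lt_of_lt_of_le hδ0 hwd
  have hgw : (1 - 5*(K:ℝ)*τ) * dist w.1 w.2 ≤ (g : M → ℝ) w.1 - (g : M → ℝ) w.2 := by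
    have hm := hmolg w hwF
    rw [molecule_apply, inv_mul_eq_div, le_div_iff₀ hwd0] at hm
    exact hm
  -- final contradiction
  have e1 := (abs_le.mp (hgle w.1 p)).2
  have e2 := (abs_le.mp (hgle q w.2)).2
  have key : (1 - 5*(K:ℝ)*τ) * dist w.1 w.2 + (1 - 2*τ) * dist p q <
      dist w.1 p + dist q w.2 := by linarith
  have hc1 : dist w.1 p < δ/4 := by rw [dist_comm]; exact hw1
  have hc2 : dist q w.2 < δ/4 := hw2
  have hL1 : (3/8)*δ ≤ (1 - 5*(K:ℝ)*τ) * dist w.1 w.2 := by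
    have h38 : (3/8:ℝ) ≤ 1 - 5*(K:ℝ)*τ := by linarith
    calc (3/8)*δ ≤ (1 - 5*(K:ℝ)*τ) * δ := mul_le_mul_of_nonneg_right h38 hδ0.le
      _ ≤ (1 - 5*(K:ℝ)*τ) * dist w.1 w.2 := mul_le_mul_of_nonneg_left hwd (by linarith)
  have hL2 : (3/4)*δ ≤ (1 - 2*τ) * dist p q := by
    have h34 : (3/4:ℝ) ≤ 1 - 2*τ := by linarith
    calc (3/4)*δ ≤ (1 - 2*τ) * δ := mul_le_mul_of_nonneg_right h34 hδ0.le
      _ ≤ (1 - 2*τ) * dist p q := mul_le_mul_of_nonneg_left hdδ (by linarith)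
  linarith
end
end

section
/- Let M be a metric space with base point 0 and let f ∈ S_{Lip_0(M)} be such that for every ε > 0 there exist a sequence of molecules (m_{u_iv_i})_{i∈ℕ} contained in the slice S(f, ε) = {μ ∈ B_{F(M)} : f(μ) > 1 − ε} and a sequence (A_i)_{i∈ℕ} of pairwise disjoint subsets of M such that u_i ∈ A_i and d(u_i,x) + d(v_i,y) ≥ (1 − ε)(d(u_i,v_i) + d(x,y)) for all i ∈ ℕ and all x, y ∈ M \ A_i. Then f is a Daugavet-point of the Banach space Lip_0(M). In particular, if f ∈ S_{Lip_0(M)} is such that for every ε > 0 there exists a sequence of molecules (m_{u_iv_i})_{i∈ℕ} contained in S(f, ε) such that at least one of the sequences (u_i) and (v_i) is unbounded, then f is a Daugavet-point. -/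
open Metric Set Filter NNReal

noncomputable section

open DeltaPaper NormedSpace

namespace Stmt14Aux

variable {M : Type*} [MetricSpace M] {z : M}

lemma lip0_dist_le (f : ↥(Lip0 M z)) (x y : M) :
    |(f : M → ℝ) x - (f : M → ℝ) y| ≤ ‖f‖ * dist x y := by
  have := (Lip0.lipschitzWith f).dist_le_mul x y
  rw [Real.dist_eq] at this
  rw [Lip0.norm_def]
  exact this

lemma norm_le_of_lip {f : ↥(Lip0 M z)} {K : ℝ≥0} (h : LipschitzWith K (f : M → ℝ)) :
    ‖f‖ ≤ (K : ℝ) := by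
  rw [Lip0.norm_def]; exact_mod_cast lipConst_le h

lemma molecule_apply (x y : M) (f : ↥(Lip0 M z)) :
    molecule M z x y f = (dist x y)⁻¹ * ((f : M → ℝ) x - (f : M → ℝ) y) := rfl

lemma construct (h : ↥(Lip0 M z)) (hh : ‖h‖ ≤ 1) {ε : ℝ} (hε0 : 0 < ε) (hε1 : ε ≤ 1)
    {u v : M} (huv : u ≠ v) {A : Set M} (hzA : z ∉ A)
    (hcond : ∀ x ∉ A, ∀ y ∉ A,
      (1 - ε) * (dist u v + dist x y) ≤ dist u x + dist v y) :
    ∃ g : ↥(Lip0 M z), ‖g‖ ≤ 1 ∧ (∀ x ∉ A, (g : M → ℝ) x = (1 - ε) * (h : M → ℝ) x) ∧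
      (g : M → ℝ) u - (g : M → ℝ) v = -((1 - ε) * dist u v) := by
  set c : ℝ := 1 - ε with hc
  have hc0 : 0 ≤ c := by simp [hc]; linarith
  have hc1 : c ≤ 1 := by simp [hc]; linarith
  set t : ℝ := dist u v with ht
  have ht0 : 0 < t := dist_pos.mpr huv
  set H : M → ℝ := fun x => c * (h : M → ℝ) x with hHdef
  -- basic Lipschitz estimates for H
  have hHd : ∀ x y : M, H x - H y ≤ c * dist x y := by
    intro x y
    have h1 := lip0_dist_le h x y
    have h2 : |(h : M → ℝ) x - (h : M → ℝ) y| ≤ dist x y := by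
      refine h1.trans ?_
      have := dist_nonneg (x := x) (y := y)
      nlinarith
    have h3 := (abs_le.mp h2).2
    have : H x - H y = c * ((h : M → ℝ) x - (h : M → ℝ) y) := by simp [hHdef]; ring
    rw [this]
    exact mul_le_mul_of_nonneg_left h3 hc0
  have hHd1 : ∀ x y : M, H x - H y ≤ dist x y := by
    intro x y
    refine (hHd x y).trans ?_
    have := dist_nonneg (x := x) (y := y)
    nlinarith
  set S : Set ℝ := (fun x => max (H x - dist v x) (H x + c * t - dist u x)) '' Aᶜ with hSdef
  have hSne : S.Nonempty := ⟨_, ⟨z, hzA, rfl⟩⟩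
  have hSub : ∀ r ∈ S, r ≤ H u + c * t := by
    rintro r ⟨x, hx, rfl⟩
    apply max_le
    · have e1 : H x - H v ≤ dist v x := by
        have := hHd1 x v; rwa [dist_comm x v] at this
      have e2 : H v - H u ≤ c * t := by
        have := hHd v u; rwa [dist_comm v u, ← ht] at this
      linarith
    · have e1 : H x - H u ≤ dist u x := by
        have := hHd1 x u; rwa [dist_comm x u] at this
      linarith
  have hSbdd : BddAbove S := ⟨H u + c * t, fun r hr => hSub r hr⟩
  set L : ℝ := sSup S with hL
  set b : ℝ := max (H v) L with hb
  set a : ℝ := b - c * t with ha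
  have hbub : b ≤ H u + c * t := by
    apply max_le
    · have := hHd v u; rw [dist_comm v u, ← ht] at this; linarith
    · exact csSup_le hSne hSub
  have hbge2 : ∀ x ∉ A, H x + c * t - dist u x ≤ b := by
    intro x hx
    refine le_trans (le_trans (le_max_right _ _) (le_csSup hSbdd ⟨x, hx, rfl⟩)) (le_max_right _ _)
  have hble : ∀ x ∉ A, b ≤ H x + dist v x := by
    intro x hx
    apply max_le
    · have := hHd1 v x; linarith
    · refine csSup_le hSne ?_
      rintro r ⟨x', hx', rfl⟩
      apply max_le
      · have e1 : H x' - H x ≤ dist x' x := hHd1 x' x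
        have e2 : dist x' x ≤ dist x' v + dist v x := dist_triangle x' v x
        have e3 : dist x' v = dist v x' := dist_comm _ _
        linarith
      · have e1 := hcond x' hx' x hx
        have e2 : H x' - H x ≤ c * dist x' x := hHd x' x
        rw [mul_add] at e1
        linarith
  -- the perturbed function
  set g₀ : M → ℝ := fun x => max (min (H x) (a + dist x u)) (b - dist x v) with hg₀
  have hoffA : ∀ x ∉ A, g₀ x = H x := by
    intro x hx
    have h1 : H x ≤ a + dist x u := by
      have := hbge2 x hx; rw [dist_comm x u]; simp only [ha]; linarith
    have h2 : b - dist x v ≤ H x := by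
      have := hble x hx; rw [dist_comm x v]; linarith
    simp only [hg₀, min_eq_left h1, max_eq_left h2]
  have hgu : g₀ u = a := by
    have h1 : a ≤ H u := by simp only [ha]; linarith
    have h2 : b - dist u v ≤ a := by simp only [ha, ← ht]; nlinarith
    simp only [hg₀, dist_self, add_zero, min_eq_right h1, max_eq_left h2]
  have hgv : g₀ v = b := by
    have h1 : min (H v) (a + dist v u) ≤ b := le_trans (min_le_left _ _) (le_max_left _ _)
    simp only [hg₀, dist_self, sub_zero, max_eq_right h1]
  -- Lipschitz
  have lip1 : LipschitzWith 1 H := by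
    apply LipschitzWith.of_dist_le_mul
    intro x y
    rw [Real.dist_eq, NNReal.coe_one, one_mul]
    rw [abs_le]
    constructor
    · have := hHd1 y x; rw [dist_comm y x] at this; linarith
    · exact hHd1 x y
  have lip2 : LipschitzWith 1 (fun x => a + dist x u) := by
    apply LipschitzWith.of_dist_le_mul
    intro x y
    rw [Real.dist_eq, NNReal.coe_one, one_mul]
    simpa using abs_dist_sub_le x y u
  have lip3 : LipschitzWith 1 (fun x => b - dist x v) := by
    apply LipschitzWith.of_dist_le_mul
    intro x y
    rw [Real.dist_eq, NNReal.coe_one, one_mul]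
    have heq : (b - dist x v) - (b - dist y v) = dist y v - dist x v := by ring
    rw [heq]
    have h1 := abs_dist_sub_le y x v
    rwa [dist_comm y x] at h1
  have lipmin : LipschitzWith 1 (fun x => min (H x) (a + dist x u)) := by
    simpa using lip1.min lip2
  have lipg : LipschitzWith 1 g₀ := by
    simpa [hg₀] using lipmin.max lip3
  have hgz : g₀ z = 0 := by
    rw [hoffA z hzA]
    simp only [hHdef]
    rw [h.2.2, mul_zero]
  refine ⟨⟨g₀, ⟨⟨1, lipg⟩, hgz⟩⟩, ?_, ?_, ?_⟩
  · have hn := norm_le_of_lip (f := (⟨g₀, ⟨⟨1, lipg⟩, hgz⟩⟩ : ↥(Lip0 M z))) (K := 1) lipg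
    simpa using hn
  · intro x hx
    show g₀ x = (1 - ε) * (h : M → ℝ) x
    rw [hoffA x hx, hHdef]
  · show g₀ u - g₀ v = -((1 - ε) * dist u v)
    rw [hgu, hgv, ha]
    ring

lemma sum_norm_le (d : ℕ → ↥(Lip0 M z)) (A : ℕ → Set M)
    (hd : ∀ i, ‖d i‖ ≤ 2)
    (hsupp : ∀ i, ∀ x ∉ A i, (d i : M → ℝ) x = 0)
    (hdisj : Pairwise fun i j => Disjoint (A i) (A j))
    (T : Finset ℕ) : ‖∑ i ∈ T, d i‖ ≤ 4 := by
  have hterm : ∀ (i : ℕ) (x y : M), |(d i : M → ℝ) x - (d i : M → ℝ) y| ≤ 2 * dist x y :=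
    fun i x y => (lip0_dist_le (d i) x y).trans
      (mul_le_mul_of_nonneg_right (hd i) dist_nonneg)
  have hcoe : ∀ x : M, ((∑ i ∈ T, d i : ↥(Lip0 M z)) : M → ℝ) x = ∑ i ∈ T, (d i : M → ℝ) x := by
    intro x
    rw [Submodule.coe_sum]
    exact Finset.sum_apply x T _
  have key : ∀ x y : M,
      |∑ i ∈ T, (d i : M → ℝ) x - ∑ i ∈ T, (d i : M → ℝ) y| ≤ 4 * dist x y := by
    intro x y
    have hdd := dist_nonneg (x := x) (y := y)
    by_cases hx : ∃ j ∈ T, x ∈ A j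
    · obtain ⟨j, hjT, hxj⟩ := hx
      have sx : ∑ i ∈ T, (d i : M → ℝ) x = (d j : M → ℝ) x := by
        apply Finset.sum_eq_single_of_mem j hjT
        intro i hiT hij
        exact hsupp i x (Set.disjoint_right.mp (hdisj hij) hxj)
      by_cases hy : ∃ k ∈ T, y ∈ A k
      · obtain ⟨k, hkT, hyk⟩ := hy
        have sy : ∑ i ∈ T, (d i : M → ℝ) y = (d k : M → ℝ) y := by
          apply Finset.sum_eq_single_of_mem k hkT
          intro i hiT hik
          exact hsupp i y (Set.disjoint_right.mp (hdisj hik) hyk)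
        rw [sx, sy]
        by_cases hjk : j = k
        · subst hjk
          exact (hterm j x y).trans (by linarith)
        · have hy0 : (d j : M → ℝ) y = 0 :=
            hsupp j y (Set.disjoint_left.mp (hdisj (Ne.symm hjk)) hyk)
          have hx0 : (d k : M → ℝ) x = 0 :=
            hsupp k x (Set.disjoint_left.mp (hdisj hjk) hxj)
          have h1 := hterm j x y
          have h2 := hterm k x y
          rw [hy0, sub_zero] at h1
          rw [hx0, zero_sub, abs_neg] at h2
          rw [abs_le] at h1 h2 ⊢
          constructor <;> [skip; skip] <;> cases h1 <;> cases h2 <;> linarith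
      · have sy : ∑ i ∈ T, (d i : M → ℝ) y = 0 := by
          apply Finset.sum_eq_zero
          intro i hiT
          exact hsupp i y (fun hyA => hy ⟨i, hiT, hyA⟩)
        have hy0 : (d j : M → ℝ) y = 0 := hsupp j y (fun hyA => hy ⟨j, hjT, hyA⟩)
        rw [sx, sy, sub_zero]
        have h1 := hterm j x y
        rw [hy0, sub_zero] at h1
        exact h1.trans (by linarith)
    · have sx : ∑ i ∈ T, (d i : M → ℝ) x = 0 := by
        apply Finset.sum_eq_zero
        intro i hiT
        exact hsupp i x (fun hxA => hx ⟨i, hiT, hxA⟩)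
      by_cases hy : ∃ k ∈ T, y ∈ A k
      · obtain ⟨k, hkT, hyk⟩ := hy
        have sy : ∑ i ∈ T, (d i : M → ℝ) y = (d k : M → ℝ) y := by
          apply Finset.sum_eq_single_of_mem k hkT
          intro i hiT hik
          exact hsupp i y (Set.disjoint_right.mp (hdisj hik) hyk)
        have hx0 : (d k : M → ℝ) x = 0 := hsupp k x (fun hxA => hx ⟨k, hkT, hxA⟩)
        rw [sx, sy, zero_sub, abs_neg]
        have h2 := hterm k x y
        rw [hx0, zero_sub, abs_neg] at h2
        exact h2.trans (by linarith)
      · have sy : ∑ i ∈ T, (d i : M → ℝ) y = 0 := by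
          apply Finset.sum_eq_zero
          intro i hiT
          exact hsupp i y (fun hyA => hy ⟨i, hiT, hyA⟩)
        rw [sx, sy, sub_zero, abs_zero]
        linarith
  have lipsum : LipschitzWith 4 ((∑ i ∈ T, d i : ↥(Lip0 M z)) : M → ℝ) := by
    apply LipschitzWith.of_dist_le_mul
    intro x y
    rw [Real.dist_eq, hcoe, hcoe]
    have := key x y
    norm_num
    exact this
  have := norm_le_of_lip lipsum
  simpa using this

lemma exists_abs_lt (φ : Dual ℝ ↥(Lip0 M z)) (hφ : ‖φ‖ = 1)
    (d : ℕ → ↥(Lip0 M z)) (hsum : ∀ T : Finset ℕ, ‖∑ i ∈ T, d i‖ ≤ 4)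
    {η : ℝ} (hη : 0 < η) : ∃ i, |φ (d i)| < η := by
  by_contra hcon
  push_neg at hcon
  obtain ⟨N, hN⟩ := exists_nat_gt (8 / η)
  have habs : ∀ T : Finset ℕ, |∑ i ∈ T, φ (d i)| ≤ 4 := by
    intro T
    rw [← map_sum]
    calc |φ (∑ i ∈ T, d i)| = ‖φ (∑ i ∈ T, d i)‖ := (Real.norm_eq_abs _).symm
      _ ≤ ‖φ‖ * ‖∑ i ∈ T, d i‖ := φ.le_opNorm _
      _ ≤ 1 * 4 := by rw [hφ]; simpa using hsum T
      _ = 4 := by norm_num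
  set P := (Finset.range N).filter (fun i => 0 ≤ φ (d i)) with hP
  set Q := (Finset.range N).filter (fun i => ¬ 0 ≤ φ (d i)) with hQ
  have hPbound : (P.card : ℝ) * η ≤ 4 := by
    have h1 : ∀ i ∈ P, η ≤ φ (d i) := by
      intro i hi
      have h2 := (Finset.mem_filter.mp hi).2
      have h3 := hcon i
      rw [abs_of_nonneg h2] at h3
      exact h3
    have h4 := Finset.card_nsmul_le_sum P (fun i => φ (d i)) η h1
    rw [nsmul_eq_mul] at h4
    have h5 : ∑ i ∈ P, φ (d i) ≤ 4 := le_trans (le_abs_self _) (habs P)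
    linarith
  have hQbound : (Q.card : ℝ) * η ≤ 4 := by
    have h1 : ∀ i ∈ Q, η ≤ -φ (d i) := by
      intro i hi
      have h2 := (Finset.mem_filter.mp hi).2
      push_neg at h2
      have h3 := hcon i
      rw [abs_of_neg h2] at h3
      exact h3
    have h4 := Finset.card_nsmul_le_sum Q (fun i => -φ (d i)) η h1
    rw [nsmul_eq_mul] at h4
    have h5 : ∑ i ∈ Q, -φ (d i) ≤ 4 := by
      rw [Finset.sum_neg_distrib]
      exact le_trans (neg_le_abs _) (habs Q)
    linarith
  have hcard : P.card + Q.card = N := by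
    rw [hP, hQ, Finset.card_filter_add_card_filter_not, Finset.card_range]
  have hNη : 8 < (N : ℝ) * η := by
    rw [div_lt_iff₀ hη] at hN
    linarith
  have : ((N : ℝ)) * η ≤ 8 := by
    have := hcard
    have hcast : ((N : ℝ)) = (P.card : ℝ) + (Q.card : ℝ) := by exact_mod_cast hcard.symm
    rw [hcast, add_mul]
    linarith
  linarith

lemma core (f : ↥(Lip0 M z)) {ε : ℝ} (hε0 : 0 < ε) (hε1 : ε ≤ 1)
    (u v : ℕ → M) (A : ℕ → Set M)
    (huv : ∀ i, u i ≠ v i)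
    (hmol : ∀ i, ‖molecule M z (u i) (v i)‖ ≤ 1 ∧ 1 - ε < molecule M z (u i) (v i) f)
    (hdisj : Pairwise fun i j => Disjoint (A i) (A j))
    (hzA : ∀ i, z ∉ A i)
    (hcond : ∀ i, ∀ x ∉ A i, ∀ y ∉ A i,
      (1 - ε) * (dist (u i) (v i) + dist x y) ≤ dist (u i) x + dist (v i) y)
    (φ : Dual ℝ ↥(Lip0 M z)) (hφ : ‖φ‖ = 1) {η : ℝ} (hη : 0 < η) :
    ∃ g : ↥(Lip0 M z), ‖g‖ ≤ 1 ∧ 1 - 2*ε - η < φ g ∧ 2 - 2*ε ≤ ‖f - g‖ := by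
  -- get a norm-one-ish element of the slice
  obtain ⟨h, hh1, hφh⟩ : ∃ h : ↥(Lip0 M z), ‖h‖ ≤ 1 ∧ 1 - ε < φ h := by
    have h1 : (1 - ε : ℝ) < ‖φ‖ := by rw [hφ]; linarith
    obtain ⟨h₀, hh₀, hφh₀⟩ := φ.exists_lt_apply_of_lt_opNorm h1
    rw [Real.norm_eq_abs] at hφh₀
    rcases le_or_gt 0 (φ h₀) with hsgn | hsgn
    · exact ⟨h₀, hh₀.le, by rwa [abs_of_nonneg hsgn] at hφh₀⟩
    · refine ⟨-h₀, by simpa using hh₀.le, ?_⟩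
      rw [map_neg]
      rwa [abs_of_neg hsgn] at hφh₀
  choose g hg1 hg2 hg3 using fun i =>
    construct (z := z) h hh1 hε0 hε1 (huv i) (hzA i) (hcond i)
  set d : ℕ → ↥(Lip0 M z) := fun i => g i - (1 - ε) • h with hd
  have dcoe : ∀ (i : ℕ) (x : M),
      ((d i : ↥(Lip0 M z)) : M → ℝ) x = (g i : M → ℝ) x - (1 - ε) * (h : M → ℝ) x := by
    intro i x
    simp [hd]
  have hsupp : ∀ i, ∀ x ∉ A i, (d i : M → ℝ) x = 0 := by
    intro i x hx
    rw [dcoe, hg2 i x hx, sub_self]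
  have hd2 : ∀ i, ‖d i‖ ≤ 2 := by
    intro i
    calc ‖d i‖ ≤ ‖g i‖ + ‖(1 - ε) • h‖ := norm_sub_le _ _
      _ ≤ 1 + |1 - ε| * ‖h‖ := by
          rw [norm_smul, Real.norm_eq_abs]
          exact add_le_add (hg1 i) le_rfl
      _ ≤ 2 := by
          have : |1 - ε| = 1 - ε := abs_of_nonneg (by linarith)
          rw [this]
          nlinarith [norm_nonneg h]
  obtain ⟨i, hi⟩ := exists_abs_lt φ hφ d (fun T => sum_norm_le d A hd2 hsupp hdisj T) hη
  refine ⟨g i, hg1 i, ?_, ?_⟩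
  · have hgi : g i = d i + (1 - ε) • h := by simp [hd]
    rw [hgi, map_add, map_smul]
    have h1 : -η < φ (d i) := neg_lt_of_abs_lt hi
    have h2 : (1 - ε) * (1 - ε) ≤ (1 - ε) * φ h :=
      mul_le_mul_of_nonneg_left hφh.le (by linarith)
    have h3 : (1 : ℝ) - 2*ε ≤ (1 - ε) * (1 - ε) := by nlinarith [sq_nonneg ε]
    have : φ ((1 - ε) • h) = (1 - ε) * φ h := by simp
    simp only [smul_eq_mul]
    linarith
  · set μ := molecule M z (u i) (v i) with hμ
    have ht0 : (0 : ℝ) < dist (u i) (v i) := dist_pos.mpr (huv i)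
    have hμg : μ (g i) = -(1 - ε) := by
      rw [hμ, molecule_apply, hg3 i]
      field_simp
    have hμfg : 2 - 2*ε < μ (f - g i) := by
      rw [map_sub, hμg]
      have := (hmol i).2
      rw [← hμ] at this
      linarith
    have hb : μ (f - g i) ≤ ‖f - g i‖ := by
      calc μ (f - g i) ≤ |μ (f - g i)| := le_abs_self _
        _ = ‖μ (f - g i)‖ := (Real.norm_eq_abs _).symm
        _ ≤ ‖μ‖ * ‖f - g i‖ := μ.le_opNorm _
        _ ≤ 1 * ‖f - g i‖ := mul_le_mul_of_nonneg_right (hmol i).1 (norm_nonneg _)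
        _ = ‖f - g i‖ := one_mul _
    linarith

lemma part1core (f : ↥(Lip0 M z))
    (hyp : ∀ ε > (0:ℝ), ∃ (u v : ℕ → M) (A : ℕ → Set M),
        (∀ i, u i ≠ v i) ∧
        (∀ i, ‖molecule M z (u i) (v i)‖ ≤ 1 ∧ 1 - ε < molecule M z (u i) (v i) f) ∧
        (Pairwise fun i j => Disjoint (A i) (A j)) ∧
        (∀ i, ∀ x ∉ A i, ∀ y ∉ A i,
          (1 - ε) * (dist (u i) (v i) + dist x y) ≤ dist (u i) x + dist (v i) y)) :
    IsDaugavetPoint f := by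
  intro φ α hφ hα ε hε
  set ε' : ℝ := min (ε/2) (min (α/8) 1) with hε'def
  have hε'0 : 0 < ε' := lt_min (by linarith) (lt_min (by linarith) one_pos)
  have hε'1 : ε' ≤ 1 := le_trans (min_le_right _ _) (min_le_right _ _)
  have hε'e : ε' ≤ ε/2 := min_le_left _ _
  have hε'a : ε' ≤ α/8 := le_trans (min_le_right _ _) (min_le_left _ _)
  obtain ⟨u, v, A, huv, hmol, hdisj, hcond⟩ := hyp ε' hε'0
  obtain ⟨σ, hσinj, hσz⟩ : ∃ σ : ℕ → ℕ, Function.Injective σ ∧ ∀ n, z ∉ A (σ n) := by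
    by_cases hA : ∃ i₀, z ∈ A i₀
    · obtain ⟨i₀, hi₀⟩ := hA
      refine ⟨fun n => n + i₀ + 1, fun m n hmn => ?_, fun n hzn => ?_⟩
      · have hmn' : m + i₀ + 1 = n + i₀ + 1 := hmn
        omega
      have hne : n + i₀ + 1 ≠ i₀ := by omega
      exact Set.disjoint_left.mp (hdisj hne) hzn hi₀
    · push_neg at hA
      exact ⟨id, fun a b hab => hab, fun n => hA n⟩
  obtain ⟨g, hgn, hgφ, hgd⟩ := core f hε'0 hε'1 (fun n => u (σ n)) (fun n => v (σ n))
    (fun n => A (σ n)) (fun n => huv (σ n)) (fun n => hmol (σ n))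
    (fun m n hmn => hdisj (hσinj.ne hmn)) hσz
    (fun n => hcond (σ n)) φ hφ (show (0:ℝ) < α/2 by linarith)
  exact ⟨g, hgn, by linarith, by linarith⟩

lemma condU {ε : ℝ} (hε0 : 0 < ε) (hε1 : ε ≤ 1) {u v x y : M}
    (hy : 2 * dist u v / ε ≤ dist u y) :
    (1 - ε) * (dist u v + dist x y) ≤ dist u x + dist v y := by
  have e1 : dist x y ≤ dist u x + dist u y := by
    have := dist_triangle x u y
    rw [dist_comm x u] at this; linarith
  have e2 : dist u y ≤ dist u v + dist v y := dist_triangle u v y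
  have e3 : 2 * dist u v ≤ ε * dist u y := by
    rw [div_le_iff₀ hε0] at hy; linarith
  have e4 := mul_le_mul_of_nonneg_left e1 (show (0:ℝ) ≤ 1 - ε by linarith)
  nlinarith [dist_nonneg (x := u) (y := x), dist_nonneg (x := u) (y := v),
    mul_nonneg hε0.le (dist_nonneg (x := u) (y := x)),
    mul_nonneg (show (0:ℝ) ≤ 1 - ε by linarith) (dist_nonneg (x := u) (y := x)),
    mul_nonneg hε0.le (dist_nonneg (x := u) (y := v))]

lemma condV {ε : ℝ} (hε0 : 0 < ε) (hε1 : ε ≤ 1) {u v x y : M}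
    (hx : 2 * dist u v / ε ≤ dist v x) :
    (1 - ε) * (dist u v + dist x y) ≤ dist u x + dist v y := by
  have e1 : dist x y ≤ dist v x + dist v y := by
    have := dist_triangle x v y
    rw [dist_comm x v] at this; linarith
  have e2 : dist v x ≤ dist u v + dist u x := by
    have := dist_triangle v u x
    rw [dist_comm v u] at this; linarith
  have e3 : 2 * dist u v ≤ ε * dist v x := by
    rw [div_le_iff₀ hε0] at hx; linarith
  have e4 := mul_le_mul_of_nonneg_left e1 (show (0:ℝ) ≤ 1 - ε by linarith)
  nlinarith [dist_nonneg (x := v) (y := y), dist_nonneg (x := u) (y := v),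
    mul_nonneg hε0.le (dist_nonneg (x := v) (y := y)),
    mul_nonneg (show (0:ℝ) ≤ 1 - ε by linarith) (dist_nonneg (x := v) (y := y)),
    mul_nonneg hε0.le (dist_nonneg (x := u) (y := v))]

lemma condAnn {ε : ℝ} (hε0 : 0 < ε) (hε1 : ε ≤ 1) {u v x y : M}
    (hu : ε * dist u z ≤ 4 * dist u v) (hv : ε * dist v z ≤ 4 * dist u v)
    (hx : 4 * dist z x ≤ ε * dist u v ∨ 9 * dist u v ≤ ε^2 * dist z x)
    (hy : 4 * dist z y ≤ ε * dist u v ∨ 9 * dist u v ≤ ε^2 * dist z y) :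
    (1 - ε) * (dist u v + dist x y) ≤ dist u x + dist v y := by
  have ht0 : (0:ℝ) ≤ dist u v := dist_nonneg
  have e1 : dist x y ≤ dist z x + dist z y := by
    have := dist_triangle x z y
    rw [dist_comm x z] at this; linarith
  have e2 : dist u v ≤ dist u z + dist v z := by
    have := dist_triangle u z v
    rw [dist_comm z v] at this; linarith
  have e3 : dist u z - dist z x ≤ dist u x := by
    have := dist_triangle u x z
    rw [dist_comm x z] at this; linarith
  have e3' : dist z x - dist u z ≤ dist u x := by
    have := dist_triangle z u x
    rw [dist_comm z u] at this; linarith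
  have e4 : dist v z - dist z y ≤ dist v y := by
    have := dist_triangle v y z
    rw [dist_comm y z] at this; linarith
  have e4' : dist z y - dist v z ≤ dist v y := by
    have := dist_triangle z v y
    rw [dist_comm z v] at this; linarith
  have e5 : (0:ℝ) ≤ dist u x := dist_nonneg
  have e6 : (0:ℝ) ≤ dist v y := dist_nonneg
  have h1ε : (0:ℝ) ≤ 1 - ε := by linarith
  have e0 := mul_le_mul_of_nonneg_left e1 h1ε
  have nn1 : (0:ℝ) ≤ ε * dist z x := mul_nonneg hε0.le dist_nonneg
  have nn2 : (0:ℝ) ≤ ε * dist z y := mul_nonneg hε0.le dist_nonneg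
  have nn3 : (0:ℝ) ≤ ε * dist u v := mul_nonneg hε0.le ht0
  have nn4 : (0:ℝ) ≤ (1-ε) * dist u v := mul_nonneg h1ε ht0
  have nn5 : (0:ℝ) ≤ ε * ((1-ε) * dist u v) := mul_nonneg hε0.le nn4
  rcases hx with hx | hx <;> rcases hy with hy | hy
  · -- both inner
    nlinarith
  · -- x inner, y outer
    have key : dist u v - ε * dist u v + dist z x - ε * dist z x + dist v z
        ≤ ε * dist z y := by
      rw [← mul_le_mul_iff_of_pos_left hε0]
      have m1 := mul_le_mul_of_nonneg_left hx hε0.le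
      have m2 : (0:ℝ) ≤ ε * (ε * dist z x) := mul_nonneg hε0.le nn1
      nlinarith
    linarith
  · -- x outer, y inner
    have key : dist u v - ε * dist u v + dist z y - ε * dist z y + dist u z
        ≤ ε * dist z x := by
      rw [← mul_le_mul_iff_of_pos_left hε0]
      have m1 := mul_le_mul_of_nonneg_left hy hε0.le
      have m2 : (0:ℝ) ≤ ε * (ε * dist z y) := mul_nonneg hε0.le nn2
      nlinarith
    linarith
  · -- both outer
    have key : dist u v - ε * dist u v + dist u z + dist v z
        ≤ ε * dist z x + ε * dist z y := by
      rw [← mul_le_mul_iff_of_pos_left hε0]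
      nlinarith
    linarith

lemma part2core (f : ↥(Lip0 M z))
    (hyp : ∀ ε > (0:ℝ), ∃ u v : ℕ → M,
        (∀ i, u i ≠ v i) ∧
        (∀ i, ‖molecule M z (u i) (v i)‖ ≤ 1 ∧ 1 - ε < molecule M z (u i) (v i) f) ∧
        (¬ Bornology.IsBounded (Set.range u) ∨ ¬ Bornology.IsBounded (Set.range v))) :
    IsDaugavetPoint f := by
  intro φ α hφ hα ε hε
  set ε' : ℝ := min (ε/2) (min (α/8) 1) with hε'def
  have hε'0 : 0 < ε' := lt_min (by linarith) (lt_min (by linarith) one_pos)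
  have hε'1 : ε' ≤ 1 := le_trans (min_le_right _ _) (min_le_right _ _)
  have hε'e : ε' ≤ ε/2 := min_le_left _ _
  have hε'a : ε' ≤ α/8 := le_trans (min_le_right _ _) (min_le_left _ _)
  obtain ⟨u, v, huv, hmol, hub⟩ := hyp ε' hε'0
  set t : ℕ → ℝ := fun i => dist (u i) (v i) with htdef
  set Mx : ℕ → ℝ := fun i => max (dist (u i) z) (dist (v i) z) with hMxdef
  have ht0 : ∀ i, 0 < t i := fun i => dist_pos.mpr (huv i)
  have hMxnn : ∀ i, 0 ≤ Mx i := fun i => le_trans dist_nonneg (le_max_left _ _)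
  have hMub : ∀ R : ℝ, ∃ i, R < Mx i := by
    intro R
    have key : ∀ w : ℕ → M, ¬ Bornology.IsBounded (Set.range w) →
        ∃ i, R < dist (w i) z := by
      intro w hw
      by_contra hcon
      push_neg at hcon
      apply hw
      rw [Metric.isBounded_iff_subset_closedBall z]
      exact ⟨R, by rintro p ⟨i, rfl⟩; rw [Metric.mem_closedBall]; exact hcon i⟩
    rcases hub with hu' | hv'
    · obtain ⟨i, hi⟩ := key u hu'
      exact ⟨i, lt_of_lt_of_le hi (le_max_left _ _)⟩
    · obtain ⟨i, hi⟩ := key v hv'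
      exact ⟨i, lt_of_lt_of_le hi (le_max_right _ _)⟩
  have finish : ∀ (k : ℕ → ℕ) (A : ℕ → Set M),
      (Pairwise fun i j => Disjoint (A i) (A j)) →
      (∀ n, z ∉ A n) →
      (∀ n, ∀ x ∉ A n, ∀ y ∉ A n,
        (1 - ε') * (dist (u (k n)) (v (k n)) + dist x y)
          ≤ dist (u (k n)) x + dist (v (k n)) y) →
      ∃ g : ↥(Lip0 M z), ‖g‖ ≤ 1 ∧ 1 - α < φ g ∧ 2 - ε ≤ ‖f - g‖ := by
    intro k A h1 h2 h3
    obtain ⟨g, hgn, hgφ, hgd⟩ := core f hε'0 hε'1 (fun n => u (k n)) (fun n => v (k n)) A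
      (fun n => huv (k n)) (fun n => hmol (k n)) h1 h2 h3 φ hφ
      (show (0:ℝ) < α/2 by linarith)
    exact ⟨g, hgn, by linarith, by linarith⟩
  by_cases hI : ∀ R : ℝ, ∃ i, R < Mx i ∧ 4 * t i ≤ ε' * Mx i
  · -- Case I: separated molecules at small scale — use balls around the far endpoint
    choose F hF1 hF2 using hI
    set k : ℕ → ℕ := fun n => Nat.rec (F 0) (fun _ ih => F (3 * Mx ih)) n with hkdef
    have hk0 : ∀ n, k (n + 1) = F (3 * Mx (k n)) := fun n => rfl
    have hkstep : ∀ n, 3 * Mx (k n) < Mx (k (n + 1)) := by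
      intro n; rw [hk0 n]; exact hF1 _
    have hksmall : ∀ n, 4 * t (k n) ≤ ε' * Mx (k n) := by
      intro n
      cases n with
      | zero => exact hF2 0
      | succ m => rw [hk0 m]; exact hF2 _
    have hkpos : ∀ n, 0 < Mx (k n) := by
      intro n
      cases n with
      | zero => exact lt_of_le_of_lt (le_refl 0) (hF1 0)
      | succ m =>
        have := hkstep m
        have := hMxnn (k m)
        linarith
    have hkmono : ∀ m n, m < n → 3 * Mx (k m) < Mx (k n) := by
      intro m n h
      induction n with
      | zero => omega
      | succ p ih =>
        rcases Nat.lt_succ_iff_lt_or_eq.mp h with h' | h'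
        · have i1 := ih h'
          have i2 := hkstep p
          have i3 := hMxnn (k p)
          linarith
        · subst h'; exact hkstep m
    set cpt : ℕ → M := fun n =>
      if dist (v (k n)) z ≤ dist (u (k n)) z then u (k n) else v (k n) with hcptdef
    have hcpt : ∀ n, dist (cpt n) z = Mx (k n) := by
      intro n
      simp only [hcptdef]
      split_ifs with hcc
      · exact (max_eq_left hcc).symm
      · exact (max_eq_right (not_le.mp hcc).le).symm
    set r : ℕ → ℝ := fun n => 2 * t (k n) / ε' with hrdef
    have hr0 : ∀ n, 0 < r n := fun n => div_pos (by linarith [ht0 (k n)]) hε'0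
    have hrM : ∀ n, 2 * r n ≤ Mx (k n) := by
      intro n
      have h2 : 2 * r n = 4 * t (k n) / ε' := by rw [hrdef]; ring
      rw [h2, div_le_iff₀ hε'0]
      have := hksmall n
      linarith [mul_comm ε' (Mx (k n))]
    set B : ℕ → Set M := fun n => Metric.ball (cpt n) (r n) with hBdef
    have hzB : ∀ n, z ∉ B n := by
      intro n hmem
      rw [hBdef, Metric.mem_ball] at hmem
      have h1 : dist z (cpt n) = Mx (k n) := by rw [dist_comm]; exact hcpt n
      have := hrM n
      have := hr0 n
      linarith
    have hdisjB : Pairwise fun i j => Disjoint (B i) (B j) := by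
      have haux : ∀ m n, m < n → ∀ p, p ∈ B m → p ∈ B n → False := by
        intro m n hmn p hpm hpn
        rw [hBdef, Metric.mem_ball] at hpm hpn
        have h1 : dist p z ≤ dist p (cpt m) + dist (cpt m) z :=
          dist_triangle p (cpt m) z
        have h2 : dist (cpt n) z ≤ dist p (cpt n) + dist p z := by
          have := dist_triangle (cpt n) p z
          rw [dist_comm (cpt n) p] at this; linarith
        have h3 := hkmono m n hmn
        have h4 := hrM m
        have h5 := hrM n
        have h6 := hcpt m
        have h7 := hcpt n
        have h8 := hkpos m
        linarith
      intro i j hij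
      rcases lt_or_gt_of_ne hij with hlt | hgt
      · exact Set.disjoint_left.mpr (fun p hpi hpj => haux i j hlt p hpi hpj)
      · exact Set.disjoint_left.mpr (fun p hpi hpj => haux j i hgt p hpj hpi)
    have hcondB : ∀ n, ∀ x ∉ B n, ∀ y ∉ B n,
        (1 - ε') * (dist (u (k n)) (v (k n)) + dist x y)
          ≤ dist (u (k n)) x + dist (v (k n)) y := by
      intro n x hx y hy
      rw [hBdef, Metric.mem_ball, not_lt] at hx hy
      have hreq : r n = 2 * dist (u (k n)) (v (k n)) / ε' := rfl
      by_cases hcc : dist (v (k n)) z ≤ dist (u (k n)) z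
      · have hcp : cpt n = u (k n) := by simp only [hcptdef]; rw [if_pos hcc]
        apply condU hε'0 hε'1
        rw [dist_comm (u (k n)) y, ← hreq]
        rw [hcp] at hy
        exact hy
      · have hcp : cpt n = v (k n) := by simp only [hcptdef]; rw [if_neg hcc]
        apply condV hε'0 hε'1
        rw [dist_comm (v (k n)) x, ← hreq]
        rw [hcp] at hx
        exact hx
    exact finish k B hdisjB hzB hcondB
  · -- Case II: all far molecules have large separation — use annuli around the base point
    push_neg at hI
    obtain ⟨R, hR⟩ := hI
    have claim : ∀ C : ℝ, ∃ i, C < ε'^3 * t i ∧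
        ε' * dist (u i) z ≤ 4 * t i ∧ ε' * dist (v i) z ≤ 4 * t i := by
      intro C
      obtain ⟨i, hi⟩ := hMub (max R (4 * C / ε'^4))
      have hiR : R < Mx i := lt_of_le_of_lt (le_max_left _ _) hi
      have h2 : ε' * Mx i < 4 * t i := hR i hiR
      have h3 : 4 * C / ε'^4 < Mx i := lt_of_le_of_lt (le_max_right _ _) hi
      have hε4 : (0:ℝ) < ε'^4 := pow_pos hε'0 4
      have h4 : 4 * C < ε'^4 * Mx i := by
        rw [div_lt_iff₀ hε4] at h3
        linarith [mul_comm (ε'^4) (Mx i)]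
      have h5 : ε'^4 * Mx i < 4 * (ε'^3 * t i) := by
        have hm := mul_lt_mul_of_pos_left h2 (pow_pos hε'0 3)
        calc ε'^4 * Mx i = ε'^3 * (ε' * Mx i) := by ring
          _ < ε'^3 * (4 * t i) := hm
          _ = 4 * (ε'^3 * t i) := by ring
      refine ⟨i, by linarith, ?_, ?_⟩
      · have := mul_le_mul_of_nonneg_left (le_max_left (dist (u i) z) (dist (v i) z)) hε'0.le
        linarith
      · have := mul_le_mul_of_nonneg_left (le_max_right (dist (u i) z) (dist (v i) z)) hε'0.le
        linarith
    choose F hFt hFu hFv using claim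
    set k : ℕ → ℕ := fun n => Nat.rec (F 0) (fun _ ih => F (36 * t ih)) n with hkdef
    have hk0 : ∀ n, k (n + 1) = F (36 * t (k n)) := fun n => rfl
    have hkstep : ∀ n, 36 * t (k n) < ε'^3 * t (k (n + 1)) := by
      intro n; rw [hk0 n]; exact hFt _
    have hkb : ∀ n, ε' * dist (u (k n)) z ≤ 4 * t (k n) ∧
        ε' * dist (v (k n)) z ≤ 4 * t (k n) := by
      intro n
      cases n with
      | zero => exact ⟨hFu 0, hFv 0⟩
      | succ m => rw [hk0 m]; exact ⟨hFu _, hFv _⟩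
    have hε3 : ε'^3 ≤ 1 := pow_le_one₀ hε'0.le hε'1
    have hkmono : ∀ m n, m < n → 36 * t (k m) < ε'^3 * t (k n) := by
      intro m n h
      induction n with
      | zero => omega
      | succ p ih =>
        rcases Nat.lt_succ_iff_lt_or_eq.mp h with h' | h'
        · have i1 := ih h'
          have i2 := hkstep p
          have i3 : ε'^3 * t (k p) ≤ t (k p) := by
            nlinarith [ht0 (k p)]
          have i4 := (ht0 (k p)).le
          linarith
        · subst h'; exact hkstep m
    set A : ℕ → Set M := fun n =>
      {x | ε' * t (k n) ≤ 4 * dist z x ∧ ε'^2 * dist z x < 9 * t (k n)} with hAdef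
    have hzA : ∀ n, z ∉ A n := by
      intro n hmem
      rw [hAdef, Set.mem_setOf_eq, dist_self] at hmem
      have := mul_pos hε'0 (ht0 (k n))
      linarith [hmem.1]
    have hdisjA : Pairwise fun i j => Disjoint (A i) (A j) := by
      have haux : ∀ m n, m < n → ∀ p, p ∈ A m → p ∈ A n → False := by
        intro m n hmn p hpm hpn
        rw [hAdef, Set.mem_setOf_eq] at hpm hpn
        have h1 := hpm.2
        have h2 := hpn.1
        have h3 := hkmono m n hmn
        have h4 : ε'^3 * t (k n) ≤ 4 * (ε'^2 * dist z p) := by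
          have := mul_le_mul_of_nonneg_left h2 (sq_nonneg ε')
          calc ε'^3 * t (k n) = ε' * (ε'^2 * t (k n)) := by ring
            _ = ε'^2 * (ε' * t (k n)) := by ring
            _ ≤ ε'^2 * (4 * dist z p) := mul_le_mul_of_nonneg_left h2 (sq_nonneg ε')
            _ = 4 * (ε'^2 * dist z p) := by ring
        linarith
      intro i j hij
      rcases lt_or_gt_of_ne hij with hlt | hgt
      · exact Set.disjoint_left.mpr (fun p hpi hpj => haux i j hlt p hpi hpj)
      · exact Set.disjoint_left.mpr (fun p hpi hpj => haux j i hgt p hpj hpi)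
    have hcondA : ∀ n, ∀ x ∉ A n, ∀ y ∉ A n,
        (1 - ε') * (dist (u (k n)) (v (k n)) + dist x y)
          ≤ dist (u (k n)) x + dist (v (k n)) y := by
      intro n x hx y hy
      rw [hAdef, Set.mem_setOf_eq, not_and_or, not_le, not_lt] at hx hy
      have htt : t (k n) = dist (u (k n)) (v (k n)) := rfl
      apply condAnn (z := z) hε'0 hε'1
      · rw [← htt]; exact (hkb n).1
      · rw [← htt]; exact (hkb n).2
      · rcases hx with hx | hx
        · left; rw [← htt]; exact hx.le
        · right; rw [← htt]; exact hx
      · rcases hy with hy | hy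
        · left; rw [← htt]; exact hy.le
        · right; rw [← htt]; exact hy
    exact finish k A hdisjA hzA hcondA

end Stmt14Aux
open DeltaPaper NormedSpace

/-- Proposition 4.6. If for every `ε > 0` there are a sequence of
molecules `(m_{u_iv_i})` in `S(f, ε)` and a sequence `(A_i)` of pairwise disjoint subsets of
`M` with `u_i ∈ A_i` and `d(u_i,x) + d(v_i,y) ≥ (1-ε)(d(u_i,v_i) + d(x,y))` for all `i` and
`x, y ∉ A_i`, then `f` is a Daugavet-point. In particular, if for every `ε > 0` there is a
sequence of molecules `(m_{u_iv_i})` in `S(f, ε)` with `(u_i)` or `(v_i)` unbounded, then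
`f` is a Daugavet-point. -/
theorem statement14 {M : Type*} [MetricSpace M] (z : M)
    (f : ↥(Lip0 M z)) (hf : ‖f‖ = 1) :
    ((∀ ε > (0:ℝ), ∃ (u v : ℕ → M) (A : ℕ → Set M),
        (∀ i, u i ≠ v i) ∧
        (∀ i, ‖molecule M z (u i) (v i)‖ ≤ 1 ∧ 1 - ε < molecule M z (u i) (v i) f) ∧
        (Pairwise fun i j => Disjoint (A i) (A j)) ∧
        (∀ i, u i ∈ A i) ∧
        (∀ i, ∀ x ∉ A i, ∀ y ∉ A i,
          (1 - ε) * (dist (u i) (v i) + dist x y) ≤ dist (u i) x + dist (v i) y)) →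
      IsDaugavetPoint f) ∧
    ((∀ ε > (0:ℝ), ∃ u v : ℕ → M,
        (∀ i, u i ≠ v i) ∧
        (∀ i, ‖molecule M z (u i) (v i)‖ ≤ 1 ∧ 1 - ε < molecule M z (u i) (v i) f) ∧
        (¬ Bornology.IsBounded (Set.range u) ∨ ¬ Bornology.IsBounded (Set.range v))) →
      IsDaugavetPoint f) := by
  constructor
  · intro hyp
    apply Stmt14Aux.part1core f
    intro ε hε
    obtain ⟨u, v, A, h1, h2, h3, _, h5⟩ := hyp ε hε
    exact ⟨u, v, A, h1, h2, h3, h5⟩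
  · intro hyp
    exact Stmt14Aux.part2core f hyp
end
end
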